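/- arXiv:1205.6193 — 2 statements merged into one kernel-verified Lean document; each statement's English description precedes it below -/
import Mathlib

section
/- If the coefficient of risk aversion is constant (γ_{t_n} = γ for all n), then the time consistent certainty equivalents Y* and time inconsistent certainty equivalents Ŷ coincide at every period, the optimal time consistent strategy equals the optimal time inconsistent strategy (π* = π̂), and the two pricing kernels Λ* and Λ̂ coincide. -/
open MeasureTheory Real Filter

/-- Conditional expectation given a sub-σ-algebra `m` enlarged by the event `A`
(i.e. `E[f | A ∨ m]` restricted to the corresponding branch). -/
noncomputable def ceEvent {Ω : Type*} [mΩ : MeasurableSpace Ω] (μ : Measure Ω)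
    (m : MeasurableSpace Ω) (A : Set Ω) (f : Ω → ℝ) : Ω → ℝ :=
  μ[f | m ⊔ MeasurableSpace.generateFrom {A}]

theorem stmt8 {Ω : Type*} [mΩ : MeasurableSpace Ω] (μ : Measure Ω) [IsProbabilityMeasure μ]
    (N : ℕ) (ℱ : Filtration ℕ mΩ) (h : ℝ) (hh : 0 < h)
    (Δb : ℕ → Ω → ℝ) (μc σc rc : ℕ → Ω → ℝ)
    (hrc : ∀ n ω, rc n ω = μc n ω / σc n ω)
    (D : ℕ → Ω → ℝ) (φ : ℕ → Ω → ℝ) (I : Ω → ℝ)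
    (γ : ℕ → ℝ) (hγpos : ∀ n, 0 < γ n)
    -- the coefficient of risk aversion is constant
    (hγconst : ∀ n, γ n = γ 0)
    (A : ℕ → Set Ω) (hA : ∀ n, A n = {ω | Δb n ω = 1})
    (Ystar Yhat αstar αhat ΔXstar ΔXhat Λstar Λhat : ℕ → Ω → ℝ)
    (lam : ℕ → Ω → ℝ)
    (hlam : ∀ n ω, lam n ω =
      if Δb n ω = 1 then 1 - rc n ω * Real.sqrt h else 1 + rc n ω * Real.sqrt h)
    -- wealth increments
    (hXstar : ∀ k ω, ΔXstar k ω =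
      αstar k ω * (μc k ω * h + σc k ω * Real.sqrt h * Δb k ω)
        + (D (k+1) ω - D k ω) + φ k ω * h)
    (hXhat : ∀ k ω, ΔXhat k ω =
      αhat k ω * (μc k ω * h + σc k ω * Real.sqrt h * Δb k ω)
        + (D (k+1) ω - D k ω) + φ k ω * h)
    -- certainty equivalents, time consistent (risk aversion updated) and
    -- time inconsistent (risk aversion frozen at time 0)
    (hYstar : ∀ n, n < N → ∀ ω, Real.exp (-(γ n) * Ystar (n+1) ω) =
      (μ[(fun ω' => Real.exp (-(γ n) *
        ((∑ k ∈ Finset.Ico (n+1) N, ΔXstar k ω') + I ω'))) | ℱ (n+1)]) ω)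
    (hYhat : ∀ n, n < N → ∀ ω, Real.exp (-(γ 0) * Yhat (n+1) ω) =
      (μ[(fun ω' => Real.exp (-(γ 0) *
        ((∑ k ∈ Finset.Ico (n+1) N, ΔXhat k ω') + I ω'))) | ℱ (n+1)]) ω)
    -- optimal strategies
    (hαstar : ∀ k, k < N → ∀ ω, αstar k ω =
      1 / (2 * γ k * σc k ω * Real.sqrt h) *
        Real.log ((1 + rc k ω * Real.sqrt h) / (1 - rc k ω * Real.sqrt h))
      + 1 / (2 * γ k * σc k ω * Real.sqrt h) *
        Real.log
          (ceEvent μ (ℱ k) (A k)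
              (fun ω' => Real.exp (-(γ k) * (D (k+1) ω' + Ystar (k+1) ω'))) ω /
           ceEvent μ (ℱ k) ((A k)ᶜ)
              (fun ω' => Real.exp (-(γ k) * (D (k+1) ω' + Ystar (k+1) ω'))) ω))
    (hαhat : ∀ k, k < N → ∀ ω, αhat k ω =
      1 / (2 * γ 0 * σc k ω * Real.sqrt h) *
        Real.log ((1 + rc k ω * Real.sqrt h) / (1 - rc k ω * Real.sqrt h))
      + 1 / (2 * γ 0 * σc k ω * Real.sqrt h) *
        Real.log
          (ceEvent μ (ℱ k) (A k)
              (fun ω' => Real.exp (-(γ 0) * (D (k+1) ω' + Yhat (k+1) ω'))) ω /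
           ceEvent μ (ℱ k) ((A k)ᶜ)
              (fun ω' => Real.exp (-(γ 0) * (D (k+1) ω' + Yhat (k+1) ω'))) ω))
    -- one-step pricing kernels
    (hΛstar : ∀ n, n < N → ∀ ω, Λstar (n+1) ω =
      lam n ω * Real.exp (-(γ n) * (D (n+1) ω + Ystar (n+1) ω)) /
        (if Δb n ω = 1 then
          ceEvent μ (ℱ n) (A n)
            (fun ω' => Real.exp (-(γ n) * (D (n+1) ω' + Ystar (n+1) ω'))) ω
         else
          ceEvent μ (ℱ n) ((A n)ᶜ)
            (fun ω' => Real.exp (-(γ n) * (D (n+1) ω' + Ystar (n+1) ω'))) ω))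
    (hΛhat : ∀ n, n < N → ∀ ω, Λhat (n+1) ω =
      lam n ω * Real.exp (-(γ 0) * (D (n+1) ω + Yhat (n+1) ω)) /
        (if Δb n ω = 1 then
          ceEvent μ (ℱ n) (A n)
            (fun ω' => Real.exp (-(γ 0) * (D (n+1) ω' + Yhat (n+1) ω'))) ω
         else
          ceEvent μ (ℱ n) ((A n)ᶜ)
            (fun ω' => Real.exp (-(γ 0) * (D (n+1) ω' + Yhat (n+1) ω'))) ω)) :
    (∀ n, n < N → ∀ ω, Ystar (n+1) ω = Yhat (n+1) ω) ∧
    (∀ k, k < N → ∀ ω, αstar k ω = αhat k ω) ∧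
    (∀ n, n < N → ∀ ω, Λstar (n+1) ω = Λhat (n+1) ω) := by
  have hγ0 : γ 0 ≠ 0 := ne_of_gt (hγpos 0)
  have main : ∀ d, ∀ k, k < N → N ≤ k + d →
      (∀ ω, Ystar (k+1) ω = Yhat (k+1) ω) ∧ (∀ ω, αstar k ω = αhat k ω) := by
    intro d
    induction d with
    | zero => intro k hk hN; omega
    | succ d ih =>
      intro k hk hN
      have hΔX : ∀ j, k + 1 ≤ j → j < N → ∀ ω, ΔXstar j ω = ΔXhat j ω := by
        intro j hj1 hj2 ω
        have hα := (ih j hj2 (by omega)).2 ω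
        rw [hXstar, hXhat, hα]
      have hY : ∀ ω, Ystar (k+1) ω = Yhat (k+1) ω := by
        intro ω
        have h1 := hYstar k hk ω
        have h2 := hYhat k hk ω
        have hfun : (fun ω' => Real.exp (-(γ k) *
            ((∑ j ∈ Finset.Ico (k+1) N, ΔXstar j ω') + I ω'))) =
            (fun ω' => Real.exp (-(γ 0) *
            ((∑ j ∈ Finset.Ico (k+1) N, ΔXhat j ω') + I ω'))) := by
          funext ω'
          have hs : ∑ j ∈ Finset.Ico (k+1) N, ΔXstar j ω' =
              ∑ j ∈ Finset.Ico (k+1) N, ΔXhat j ω' := by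
            refine Finset.sum_congr rfl fun j hj => ?_
            rw [Finset.mem_Ico] at hj
            exact hΔX j hj.1 hj.2 ω'
          rw [hγconst k, hs]
        rw [hfun, hγconst k] at h1
        have h3 := h1.trans h2.symm
        rw [Real.exp_eq_exp] at h3
        exact mul_left_cancel₀ (neg_ne_zero.mpr hγ0) h3
      refine ⟨hY, fun ω => ?_⟩
      rw [hαstar k hk ω, hαhat k hk ω, hγconst k]
      simp only [hY]
  refine ⟨fun n hn => (main N n hn (by omega)).1,
    fun k hk => (main N k hk (by omega)).2, fun n hn ω => ?_⟩
  have hYeq := (main N n hn (by omega)).1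
  rw [hΛstar n hn ω, hΛhat n hn ω, hγconst n]
  simp only [hYeq]
end

section
/- In a two-period model with zero income and a single traded asset with constant drift μ and volatility σ (0 < (μ/σ)√h < 1), the time consistent optimal strategy at time t₁ is α*_{t₁} = (1/(2γ_{t₁}σ√h))·log((1+r√h)/(1-r√h)) with r = μ/σ, so it depends on the risk aversion only through the current value γ_{t₁}. Consequently the time consistent strategy at t₁ coincides with the strategy an agent with fixed risk aversion γ_{t₁} would choose at t₁. -/
open MeasureTheory Real Filter

lemma exp_sum_min (p q a b : ℝ) (hp : 0 < p) (hq : 0 < q)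
    (hkey : p * Real.exp (-(p*b)) = q * Real.exp (q*b)) :
    Real.exp (-(p*b)) + Real.exp (q*b) ≤ Real.exp (-(p*a)) + Real.exp (q*a) ∧
    (Real.exp (-(p*a)) + Real.exp (q*a) ≤ Real.exp (-(p*b)) + Real.exp (q*b) → a = b) := by
  set t := a - b with ht
  have e1 : Real.exp (-(p*a)) = Real.exp (-(p*b)) * Real.exp (-(p*t)) := by
    rw [← Real.exp_add, ht]; ring_nf
  have e2 : Real.exp (q*a) = Real.exp (q*b) * Real.exp (q*t) := by
    rw [← Real.exp_add, ht]; ring_nf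
  have h3 : Real.exp (-(p*b)) * (1 - p*t) + Real.exp (q*b) * (1 + q*t)
      = Real.exp (-(p*b)) + Real.exp (q*b) := by linear_combination (-t) * hkey
  have E1 := Real.exp_pos (-(p*b))
  have E2 := Real.exp_pos (q*b)
  have i2 : Real.exp (q*b) * (1 + q*t) ≤ Real.exp (q*a) := by
    rw [e2]
    have := Real.add_one_le_exp (q*t)
    nlinarith
  constructor
  · have i1 : Real.exp (-(p*b)) * (1 - p*t) ≤ Real.exp (-(p*a)) := by
      rw [e1]
      have := Real.add_one_le_exp (-(p*t))
      nlinarith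
    linarith
  · intro hle
    by_contra hne
    have htne : t ≠ 0 := by
      intro h0; exact hne (by linarith [sub_eq_zero.mp h0])
    have hpt : -(p*t) ≠ 0 := by
      intro h0; exact htne (by
        have : p * t = 0 := by linarith
        rcases mul_eq_zero.mp this with h | h
        · exact absurd h hp.ne'
        · exact h)
    have i1 : Real.exp (-(p*b)) * (1 - p*t) < Real.exp (-(p*a)) := by
      rw [e1]
      have := Real.add_one_lt_exp hpt
      nlinarith
    linarith

theorem stmt9 {Ω : Type*} [MeasurableSpace Ω]
    (γ : ℕ → Ω → ℝ) (hγpos : ∀ n ω, 0 < γ n ω)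
    (m σc h : ℝ) (hσ : 0 < σc) (hh : 0 < h)
    (r : ℝ) (hrdef : r = m / σc)
    (hr0 : 0 < r * Real.sqrt h) (hr1 : r * Real.sqrt h < 1)
    (ω : Ω)
    -- the time-t₁ objective (zero income, single asset, constant coefficients)
    (f : ℝ → ℝ)
    (hf : ∀ a, f a = -(1/2) * (Real.exp (-(γ 1 ω) * a * (m * h + σc * Real.sqrt h))
      + Real.exp (-(γ 1 ω) * a * (m * h - σc * Real.sqrt h))))
    (αstar : ℝ)
    (hαstar : αstar = 1 / (2 * γ 1 ω * σc * Real.sqrt h) *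
      Real.log ((1 + r * Real.sqrt h) / (1 - r * Real.sqrt h))) :
    IsMaxOn f Set.univ αstar ∧
    (∀ a, IsMaxOn f Set.univ a → a = αstar) ∧
    -- the strategy depends on the risk aversion only through the current value γ_{t₁}:
    (∀ c : ℝ, c = γ 1 ω →
      1 / (2 * c * σc * Real.sqrt h) *
        Real.log ((1 + r * Real.sqrt h) / (1 - r * Real.sqrt h)) = αstar) := by
  have hg : 0 < γ 1 ω := hγpos 1 ω
  have hsq : Real.sqrt h * Real.sqrt h = h := Real.mul_self_sqrt hh.le
  have hsh : 0 < Real.sqrt h := Real.sqrt_pos.mpr hh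
  have hm : m = r * σc := by rw [hrdef]; field_simp
  set g := γ 1 ω with hgdef
  set p := g * (m*h + σc*Real.sqrt h) with hpdef
  set q := g * (σc*Real.sqrt h - m*h) with hqdef
  have hmh : m * h = (σc*Real.sqrt h) * (r*Real.sqrt h) := by
    rw [hm, show σc*Real.sqrt h*(r*Real.sqrt h) = r*σc*(Real.sqrt h*Real.sqrt h) by ring, hsq]
  have hA : 0 < σc * Real.sqrt h := mul_pos hσ hsh
  have hp : 0 < p := by
    rw [hpdef, hmh]
    exact mul_pos hg (by nlinarith [mul_pos hA hr0])
  have hq : 0 < q := by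
    rw [hqdef, hmh]
    have h1 : (0:ℝ) < 1 - r*Real.sqrt h := by linarith
    exact mul_pos hg (by nlinarith [mul_pos hA h1])
  -- p/q and p+q
  have hpq : p / q = (1 + r*Real.sqrt h) / (1 - r*Real.sqrt h) := by
    have h1 : (0:ℝ) < 1 - r*Real.sqrt h := by linarith
    rw [hpdef, hqdef, hmh]
    rw [div_eq_div_iff (by nlinarith : (0:ℝ) < g*(σc*Real.sqrt h - σc*Real.sqrt h*(r*Real.sqrt h))).ne' h1.ne']
    ring
  have hsum : p + q = 2 * g * σc * Real.sqrt h := by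
    rw [hpdef, hqdef]; ring
  have hsumne : p + q ≠ 0 := by positivity
  -- exponent of αstar
  have hexp : Real.exp ((p+q) * αstar) = p / q := by
    rw [hαstar, hpq.symm, ← hsum]
    rw [show (p+q) * (1/(p+q) * Real.log (p/q)) = Real.log (p/q) by field_simp]
    exact Real.exp_log (div_pos hp hq)
  have hkey : p * Real.exp (-(p*αstar)) = q * Real.exp (q*αstar) := by
    have h2 : q * Real.exp (q*αstar) =
        q * (Real.exp ((p+q)*αstar) * Real.exp (-(p*αstar))) := by
      rw [← Real.exp_add]; ring_nf
    rw [h2, hexp]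
    field_simp
  have hfa : ∀ a, f a = -(1/2) * (Real.exp (-(p*a)) + Real.exp (q*a)) := by
    intro a
    rw [hf a]
    rw [show -g * a * (m*h + σc*Real.sqrt h) = -(p*a) by rw [hpdef]; ring,
        show -g * a * (m*h - σc*Real.sqrt h) = q*a by rw [hqdef]; ring]
  have main := fun a => exp_sum_min p q a αstar hp hq hkey
  refine ⟨?_, ?_, ?_⟩
  · intro a _
    simp only [Set.mem_setOf_eq]
    rw [hfa a, hfa αstar]
    linarith [(main a).1]
  · intro a ha
    have h1 : f αstar ≤ f a := ha (Set.mem_univ αstar)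
    rw [hfa a, hfa αstar] at h1
    exact (main a).2 (by linarith)
  · intro c hc
    rw [hc, hαstar]
end
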